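/- Let P be a polynomial in two variables with real coefficients satisfying the reduced graviton factorization constraint. Then P(E,0) = P(0,0) for all E ∈ ℝ. -/

import Mathlib

/-- Evaluation of a two-variable real polynomial at `(x, y)`. -/
noncomputable def ev (P : MvPolynomial (Fin 2) ℝ) (x y : ℝ) : ℝ :=
  MvPolynomial.eval ![x, y] P

/-- The reduced graviton factorization constraint for a two-variable polynomial `P`. -/
def GravitonConstraint (P : MvPolynomial (Fin 2) ℝ) : Prop :=
  ∀ E1 E2 E3 E4 : ℝ, E1 + E2 + E3 + E4 = 0 →
    (ev P (E1 + E3) (E1 * E3) * ev P (E2 + E4) (E2 * E4) =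
      ev P (-E2) (-E1 * (E1 + E2)) * ev P (-E3) (-E4 * (E3 + E4))) ∧
    (ev P (-E2) (-E1 * (E1 + E2)) * ev P (-E3) (-E4 * (E3 + E4)) =
      ev P (-E4) (-E1 * (E1 + E4)) * ev P (-E3) (-E2 * (E2 + E3)))

lemma ev_aeval (P : MvPolynomial (Fin 2) ℝ) (u v : Polynomial ℝ) (x : ℝ) :
    Polynomial.eval x (MvPolynomial.aeval ![u, v] P) =
      ev P (Polynomial.eval x u) (Polynomial.eval x v) := by
  unfold ev
  induction P using MvPolynomial.induction_on with
  | C a => simp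
  | add p q hp hq => simp [hp, hq]
  | mul_X p i hp => fin_cases i <;> simp [hp]

theorem stmt_1 (P : MvPolynomial (Fin 2) ℝ) (h : GravitonConstraint P) :
    ∀ E : ℝ, ev P E 0 = ev P 0 0 := by
  set c : ℝ := ev P 0 0 with hc
  have key1 : ∀ E : ℝ, ev P E 0 * ev P (-E) 0 = ev P E 0 * c ∧
      ev P E 0 * c = ev P 0 (-E^2) * ev P 0 (-E^2) := by
    intro E
    have h1 := h E (-E) 0 0 (by ring)
    ring_nf at h1 ⊢
    exact h1
  have key2 : ∀ t : ℝ, c * ev P 0 (-t^2) = ev P (-t) 0 * ev P 0 (-t^2) ∧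
      ev P (-t) 0 * ev P 0 (-t^2) = ev P t 0 * ev P 0 (-t^2) := by
    intro t
    have h1 := h 0 t 0 (-t) (by ring)
    ring_nf at h1 ⊢
    rw [hc]; constructor <;> linarith [h1.1, h1.2]
  let F : Polynomial ℝ := MvPolynomial.aeval ![Polynomial.X, 0] P
  have hF : ∀ x : ℝ, Polynomial.eval x F = ev P x 0 := by
    intro x; rw [show F = MvPolynomial.aeval ![Polynomial.X, 0] P from rfl, ev_aeval]; simp
  let G : Polynomial ℝ := MvPolynomial.aeval ![0, -Polynomial.X ^ 2] P
  have hG : ∀ x : ℝ, Polynomial.eval x G = ev P 0 (-x^2) := by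
    intro x; rw [show G = MvPolynomial.aeval ![0, -Polynomial.X ^ 2] P from rfl, ev_aeval]; simp
  by_cases hGz : G = 0
  · -- g ≡ 0 : c = 0 and F · (F ∘ (-X)) = 0, hence F = 0
    have hg : ∀ t : ℝ, ev P 0 (-t^2) = 0 := by
      intro t; rw [← hG t, hGz]; simp
    have hc0 : c = 0 := by
      have h2 := (key1 0).2
      rw [hg 0] at h2
      have h0 : ev P (0:ℝ) 0 = c := rfl
      nlinarith [h2]
    have hFF : F * F.comp (-Polynomial.X) = 0 := by
      apply Polynomial.funext
      intro x
      have h2 := (key1 x).1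
      rw [(key1 x).2, hg x] at h2
      rw [Polynomial.eval_mul, Polynomial.eval_comp, Polynomial.eval_zero,
        Polynomial.eval_neg, Polynomial.eval_X, hF, hF]
      linarith [h2]
    intro E
    rcases mul_eq_zero.mp hFF with h0 | h0
    · rw [← hF E, h0, hc0]; simp
    · have hF0 : F = 0 := by
        have h3 := congrArg (fun p => Polynomial.comp p (-Polynomial.X)) h0
        simpa [Polynomial.comp_assoc] using h3
      rw [← hF E, hF0, hc0]; simp
  · -- G ≠ 0 : then (F - C c) * G = 0 forces F = C c
    have hFG : (F - Polynomial.C c) * G = 0 := by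
      apply Polynomial.funext
      intro t
      have h1 := (key2 t).1
      have h2 := (key2 t).2
      rw [Polynomial.eval_mul, Polynomial.eval_sub, Polynomial.eval_C,
        Polynomial.eval_zero, hF, hG]
      nlinarith [h1, h2]
    rcases mul_eq_zero.mp hFG with h0 | h0
    · intro E
      have hFc : F = Polynomial.C c := by
        have := sub_eq_zero.mp h0
        exact this
      have h4 := congrArg (Polynomial.eval E) hFc
      rw [hF E] at h4; simpa using h4
    · exact absurd h0 hGz
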